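/- For every tree T and every positive integer k ≥ 1, the minimum cardinality of a k-path vertex cover of T is at most |V(T)|/k. -/

import Mathlib

open SimpleGraph

variable {V : Type*}

/-- `S` is a `k`-path vertex cover of `G`: every path on `k` vertices meets `S`. -/
def IsPathVC (G : SimpleGraph V) (k : ℕ) (S : Set V) : Prop :=
  ∀ ⦃u v : V⦄ (w : G.Walk u v), w.IsPath → w.length + 1 = k → ∃ x ∈ w.support, x ∈ S

/-- `psi G k` is the minimum cardinality of a `k`-path vertex cover of `G`. -/
noncomputable def psi (G : SimpleGraph V) (k : ℕ) : ℕ :=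
  sInf {n | ∃ S : Set V, IsPathVC G k S ∧ S.ncard = n}

/-- Two paths between the same pair of vertices in a tree coincide. -/
private lemma path_eq {T : SimpleGraph V} (hT : T.IsTree) {a b : V} {p q : T.Walk a b}
    (hp : p.IsPath) (hq : q.IsPath) : p = q := by
  obtain ⟨x, -, hu⟩ := hT.existsUnique_path a b
  rw [hu p hp, hu q hq]

/-- Walks with equal supports have equal starting points. -/
private lemma start_eq_of_support_eq {T : SimpleGraph V} {s t s' t' : V} {p : T.Walk s t}
    {q : T.Walk s' t'} (h : p.support = q.support) : s = s' := by
  have h1 := p.support_eq_cons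
  have h2 := q.support_eq_cons
  rw [h1, h2] at h
  injection h with h _

/-- A nodup list contained in a set bounds the set's cardinality from below. -/
private lemma length_le_ncard [Fintype V] {s : Set V} {l : List V} (hn : l.Nodup)
    (h : ∀ y ∈ l, y ∈ s) : l.length ≤ s.ncard := by
  classical
  calc l.length = l.toFinset.card := (List.toFinset_card_of_nodup hn).symm
    _ = (↑l.toFinset : Set V).ncard := (Set.ncard_coe_finset _).symm
    _ ≤ s.ncard := Set.ncard_le_ncard (fun y hy => h y (by simpa using hy)) (Set.toFinite s)

/-- Key step: if a tree has a `k`-vertex path inside `U`, then there is a vertex `v` and a set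
`A ⊆ U` of at least `k` vertices containing `v`, such that every `k`-vertex path inside `U`
avoiding `v` also avoids `A`. -/
private lemma step [Fintype V] {T : SimpleGraph V} (hT : T.IsTree) {k : ℕ} (hk : 1 ≤ k)
    (U : Set V) {a0 r : V} (Q : T.Walk a0 r) (hQp : Q.IsPath)
    (hQl : Q.length + 1 = k) (hQU : ∀ y ∈ Q.support, y ∈ U) :
    ∃ (v : V) (A : Set V), v ∈ A ∧ A ⊆ U ∧ k ≤ A.ncard ∧
      ∀ ⦃a b : V⦄ (w : T.Walk a b), w.IsPath → w.length + 1 = k →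
        (∀ y ∈ w.support, y ∈ U) → v ∉ w.support → ∀ y ∈ w.support, y ∉ A := by
  classical
  -- canonical paths to the root `r`
  have hexP : ∀ x : V, ∃ p : T.Walk x r, p.IsPath ∧ ∀ q : T.Walk x r, q.IsPath → q = p :=
    fun x => hT.existsUnique_path x r
  choose P hPp hPu using hexP
  have hPr : P r = Walk.nil := (hPu r Walk.nil Walk.IsPath.nil).symm
  -- the "subtree below c" inside U
  set sub : V → Set V := fun c =>
    {x | ∃ w : T.Walk x c, (∀ y ∈ w.support, y ∈ U) ∧ (w.append (P c)).IsPath} with hsub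
  have sub_self : ∀ c, c ∈ U → c ∈ sub c := by
    intro c hc
    exact ⟨Walk.nil, by simp [hc], by rw [Walk.nil_append]; exact hPp c⟩
  have sub_subset : ∀ c, sub c ⊆ U := by
    rintro c x ⟨w, hwU, -⟩
    exact hwU x w.start_mem_support
  have sub_end : ∀ c x, x ∈ sub c → c ∈ U := by
    rintro c x ⟨w, hwU, -⟩
    exact hwU c w.end_mem_support
  -- the pool of candidate vertices, and the maximizer `v`
  set pool : Finset V := Finset.univ.filter (fun c => k ≤ (sub c).ncard) with hpool
  have hrpool : r ∈ pool := by
    rw [hpool, Finset.mem_filter]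
    refine ⟨Finset.mem_univ _, ?_⟩
    have hsubQ : ∀ y ∈ Q.support, y ∈ sub r := by
      intro y hy
      refine ⟨Q.dropUntil y hy, fun z hz => hQU z (Q.support_dropUntil_subset hy hz), ?_⟩
      rw [hPr, Walk.append_nil]
      exact hQp.dropUntil hy
    calc k = Q.support.length := by rw [Walk.length_support, hQl]
      _ ≤ (sub r).ncard := length_le_ncard hQp.support_nodup hsubQ
  obtain ⟨v, hvpool, hvmax⟩ := pool.exists_max_image (fun x => (P x).length) ⟨r, hrpool⟩
  have hvA : k ≤ (sub v).ncard := (Finset.mem_filter.mp hvpool).2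
  have hvU : v ∈ U := by
    obtain ⟨x0, hx0⟩ := (Set.ncard_pos (Set.toFinite _)).mp (lt_of_lt_of_le hk hvA)
    exact sub_end v x0 hx0
  -- main claim
  have crux : ∀ ⦃a b : V⦄ (w : T.Walk a b), w.IsPath → w.length + 1 = k →
      (∀ y ∈ w.support, y ∈ U) → v ∉ w.support → ∀ x ∈ w.support, x ∉ sub v := by
    intro a b w hwp hwl hwU hwv x hx hxA
    obtain ⟨wx, hwxU, hwxP⟩ := hxA
    have hxv : x ≠ v := fun h => hwv (h ▸ hx)
    -- find the child `c` of `v` towards `x`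
    obtain ⟨c, hvc, m, hm⟩ := Walk.exists_eq_cons_of_ne (Ne.symm hxv) wx.reverse
    have hwxeq : wx = m.reverse.append (Walk.cons hvc.symm Walk.nil) := by
      rw [← Walk.reverse_reverse wx, hm, Walk.reverse_cons]
    have hcwx : c ∈ wx.support := by
      have h1 : c ∈ wx.reverse.support := by
        rw [hm, Walk.support_cons]
        exact List.mem_cons_of_mem _ m.start_mem_support
      rwa [Walk.support_reverse, List.mem_reverse] at h1
    have hcU : c ∈ U := hwxU c hcwx
    have hcPv : c ∉ (P v).support := by
      intro hcin
      have hnd := hwxP.support_nodup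
      rw [Walk.support_append] at hnd
      have hdisj := List.disjoint_of_nodup_append hnd
      have htail : c ∈ (P v).support.tail := by
        rw [(P v).support_eq_cons] at hcin
        exact (List.mem_cons.mp hcin).resolve_left (fun h => hvc.ne h.symm)
      exact hdisj hcwx htail
    have hPc : P c = Walk.cons hvc.symm (P v) :=
      (hPu c _ ((Walk.cons_isPath_iff _ _).mpr ⟨hPp v, hcPv⟩)).symm
    -- x belongs to the subtree below c
    have hmrevU : ∀ y ∈ m.reverse.support, y ∈ U := by
      intro y hy
      apply hwxU
      rw [hwxeq, Walk.mem_support_append_iff]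
      exact Or.inl hy
    have hkey : m.reverse.append (P c) = wx.append (P v) := by
      rw [hwxeq, ← Walk.append_assoc, Walk.cons_append, Walk.nil_append, ← hPc]
    have hxsubc : x ∈ sub c := ⟨m.reverse, hmrevU, by rw [hkey]; exact hwxP⟩
    -- one-step closure of the subtree below c within U, away from v
    have adjstep : ∀ z y : V, z ∈ sub c → T.Adj z y → y ∈ U → y ≠ v → y ∈ sub c := by
      intro z y hz hzy hyU hyv
      obtain ⟨wz, hwzU, hwzP⟩ := hz
      by_cases hyc : y = c
      · exact hyc ▸ sub_self c hcU
      by_cases hy : y ∈ (wz.append (P c)).support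
      · by_cases hyw : y ∈ wz.support
        · refine ⟨wz.dropUntil y hyw,
            fun z' hz' => hwzU z' (wz.support_dropUntil_subset hyw hz'), ?_⟩
          have h2 : ((wz.takeUntil y hyw).append
              ((wz.dropUntil y hyw).append (P c))).IsPath := by
            rw [Walk.append_assoc, wz.take_spec hyw]; exact hwzP
          exact h2.of_append_right
        · exfalso
          have h1 : ((wz.append (P c)).takeUntil y hy).IsPath := hwzP.takeUntil hy
          have h2 : (Walk.cons hzy Walk.nil).IsPath := by simp [hzy.ne]
          have h3 : (wz.append (P c)).takeUntil y hy = Walk.cons hzy Walk.nil :=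
            path_eq hT h1 h2
          have h4 : wz.append (P c)
              = Walk.cons hzy ((wz.append (P c)).dropUntil y hy) := by
            conv_lhs => rw [← (wz.append (P c)).take_spec hy]
            rw [h3, Walk.cons_append, Walk.nil_append]
          have h5 := congrArg Walk.support h4
          cases wz with
          | nil =>
            have hL : ((Walk.nil : T.Walk c c).append (P c)).support
                = c :: (P v).support := by
              rw [Walk.nil_append, hPc, Walk.support_cons]
            rw [hL, Walk.support_cons] at h5
            injection h5 with _ h6
            exact hyv (start_eq_of_support_eq h6).symm
          | @cons _ a' _ hza p' =>
            have hL : ((Walk.cons hza p').append (P c)).support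
                = z :: (p'.append (P c)).support := by
              rw [Walk.cons_append, Walk.support_cons]
            rw [hL, Walk.support_cons] at h5
            injection h5 with _ h6
            have ha'y : a' = y := start_eq_of_support_eq h6
            apply hyw
            rw [Walk.support_cons]
            exact List.mem_cons_of_mem _ (ha'y ▸ p'.start_mem_support)
      · refine ⟨Walk.cons hzy.symm wz, ?_, ?_⟩
        · intro y' hy'
          rw [Walk.support_cons] at hy'
          rcases List.mem_cons.mp hy' with rfl | hy''
          · exact hyU
          · exact hwzU y' hy''
        · rw [Walk.cons_append]
          exact (Walk.cons_isPath_iff _ _).mpr ⟨hwzP, hy⟩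
    -- closure along any walk inside U avoiding v
    have closure : ∀ {s t : V} (w' : T.Walk s t), (∀ y ∈ w'.support, y ∈ U) →
        v ∉ w'.support → s ∈ sub c → ∀ y ∈ w'.support, y ∈ sub c := by
      intro s t w'
      induction w' with
      | nil =>
        intro _ _ hs y hy
        rw [Walk.support_nil, List.mem_singleton] at hy
        exact hy ▸ hs
      | @cons s s' t h p ih =>
        intro hU' hv' hs y hy
        have hmem : ∀ z ∈ p.support, z ∈ (Walk.cons h p).support := by
          intro z hz
          rw [Walk.support_cons]
          exact List.mem_cons_of_mem _ hz
        have hs'U : s' ∈ U := hU' s' (hmem s' p.start_mem_support)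
        have hs'v : s' ≠ v := fun hh => hv' (hmem v (hh ▸ p.start_mem_support))
        have hs' : s' ∈ sub c := adjstep s s' hs h hs'U hs'v
        rw [Walk.support_cons] at hy
        rcases List.mem_cons.mp hy with rfl | hy'
        · exact hs
        · exact ih (fun z hz => hU' z (hmem z hz)) (fun hz => hv' (hmem v hz)) hs' y hy'
    -- the whole k-path lies in the subtree below c
    have hall : ∀ y ∈ w.support, y ∈ sub c := by
      intro y hy
      rw [← w.take_spec hx, Walk.mem_support_append_iff] at hy
      rcases hy with hy | hy
      · refine closure (w.takeUntil x hx).reverse ?_ ?_ hxsubc y ?_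
        · intro z hz
          rw [Walk.support_reverse, List.mem_reverse] at hz
          exact hwU z (w.support_takeUntil_subset hx hz)
        · rw [Walk.support_reverse, List.mem_reverse]
          exact fun hz => hwv (w.support_takeUntil_subset hx hz)
        · rw [Walk.support_reverse, List.mem_reverse]
          exact hy
      · exact closure (w.dropUntil x hx)
          (fun z hz => hwU z (w.support_dropUntil_subset hx hz))
          (fun hz => hwv (w.support_dropUntil_subset hx hz)) hxsubc y hy
    -- contradiction with maximality of v
    have hck : k ≤ (sub c).ncard := by
      calc k = w.support.length := by rw [Walk.length_support, hwl]
        _ ≤ (sub c).ncard := length_le_ncard hwp.support_nodup hall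
    have hcpool : c ∈ pool := by
      rw [hpool, Finset.mem_filter]
      exact ⟨Finset.mem_univ _, hck⟩
    have hle := hvmax c hcpool
    have hdc : (P c).length = (P v).length + 1 := by rw [hPc, Walk.length_cons]
    simp only [hdc] at hle
    omega
  exact ⟨v, sub v, sub_self v hvU, sub_subset v, hvA, crux⟩

private lemma main_lemma [Fintype V] {T : SimpleGraph V} (hT : T.IsTree) {k : ℕ} (hk : 1 ≤ k) :
    ∀ (n : ℕ) (U : Set V), U.ncard ≤ n →
      ∃ S : Set V, S ⊆ U ∧ k * S.ncard ≤ U.ncard ∧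
        ∀ ⦃a b : V⦄ (w : T.Walk a b), w.IsPath → w.length + 1 = k →
          (∀ y ∈ w.support, y ∈ U) → ∃ x ∈ w.support, x ∈ S := by
  intro n
  induction n using Nat.strong_induction_on with
  | _ n ih =>
    intro U hU
    by_cases hex : ∃ (a : V) (b : V) (w : T.Walk a b),
        w.IsPath ∧ w.length + 1 = k ∧ ∀ y ∈ w.support, y ∈ U
    · obtain ⟨a, b, Q, hQp, hQl, hQU⟩ := hex
      obtain ⟨v, A, hvA, hAU, hkA, hcov⟩ := step hT hk U Q hQp hQl hQU
      have hAcard_le : A.ncard ≤ U.ncard := Set.ncard_le_ncard hAU (Set.toFinite U)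
      have hdiff : (U \ A).ncard = U.ncard - A.ncard := Set.ncard_diff hAU
      have hlt : (U \ A).ncard < n := by omega
      obtain ⟨S', hS'sub, hS'card, hS'cov⟩ := ih _ hlt (U \ A) le_rfl
      have hvS' : v ∉ S' := fun h => (hS'sub h).2 hvA
      refine ⟨insert v S', ?_, ?_, ?_⟩
      · intro y hy
        rcases Set.mem_insert_iff.mp hy with rfl | hy'
        · exact hAU hvA
        · exact (hS'sub hy').1
      · rw [Set.ncard_insert_of_notMem hvS' (Set.toFinite S'), Nat.mul_succ]
        omega
      · intro a' b' w hwp hwl hwU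
        by_cases hvw : v ∈ w.support
        · exact ⟨v, hvw, Set.mem_insert _ _⟩
        · have hsub : ∀ y ∈ w.support, y ∈ U \ A :=
            fun y hy => ⟨hwU y hy, hcov w hwp hwl hwU hvw y hy⟩
          obtain ⟨x, hx1, hx2⟩ := hS'cov w hwp hwl hsub
          exact ⟨x, hx1, Set.mem_insert_of_mem _ hx2⟩
    · refine ⟨∅, by simp, by simp, ?_⟩
      intro a b w hwp hwl hwU
      exact absurd ⟨a, b, w, hwp, hwl, hwU⟩ hex

theorem psi_tree_le [Fintype V] (T : SimpleGraph V) (hT : T.IsTree) (k : ℕ) (hk : 1 ≤ k) :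
    (psi T k : ℚ) ≤ (Fintype.card V : ℚ) / k := by
  have hcardU : (Set.univ : Set V).ncard = Fintype.card V := by
    rw [Set.ncard_univ, Nat.card_eq_fintype_card]
  obtain ⟨S, -, hcard, hcov⟩ := main_lemma hT hk (Fintype.card V) Set.univ (le_of_eq hcardU)
  have hpvc : IsPathVC T k S := fun u v w hwp hwl => hcov w hwp hwl (fun y _ => Set.mem_univ y)
  have h1 : psi T k ≤ S.ncard := Nat.sInf_le ⟨S, hpvc, rfl⟩
  have h2 : k * psi T k ≤ Fintype.card V := by
    calc k * psi T k ≤ k * S.ncard := Nat.mul_le_mul_left k h1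
      _ ≤ (Set.univ : Set V).ncard := hcard
      _ = Fintype.card V := hcardU
  have hkpos : (0 : ℚ) < (k : ℚ) := by exact_mod_cast lt_of_lt_of_le one_pos hk
  rw [le_div_iff₀ hkpos]
  have h3 : psi T k * k ≤ Fintype.card V := by rwa [Nat.mul_comm] at h2
  exact_mod_cast h3
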